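/- Under the stated tank setup, since φ(t) ∈ {0,1} and P_D(t) ≥ 0 (which follows from positive semidefiniteness of D_d(t)), for every t ≥ 0 the dissipation inequality ∫₀ᵗ ẋ(τ)ᵀ F_ext(τ) dτ ≥ H(t) − H(0) + T(t) − T(0) − ∫₀ᵗ (1 − γ(τ)) P_M(τ) dτ holds. -/

import Mathlib

open Matrix

lemma quad_hasDerivAt {n : ℕ} {v a : ℝ → Fin n → ℝ} {M M' : ℝ → Matrix (Fin n) (Fin n) ℝ} {t : ℝ}
    (hv : ∀ i, HasDerivAt (fun s => v s i) (a t i) t)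
    (hM : ∀ i j, HasDerivAt (fun s => M s i j) (M' t i j) t) :
    HasDerivAt (fun s => v s ⬝ᵥ (M s *ᵥ v s))
      (a t ⬝ᵥ (M t *ᵥ v t) + v t ⬝ᵥ (M' t *ᵥ v t) + v t ⬝ᵥ (M t *ᵥ a t)) t := by
  have h := HasDerivAt.fun_sum (u := Finset.univ) (fun i _ =>
    (hv i).mul (HasDerivAt.fun_sum (u := Finset.univ) fun j _ => (hM i j).mul (hv j)))
  refine h.congr_deriv ?_
  simp only [dotProduct, Matrix.mulVec, Pi.mul_apply, Finset.mul_sum, Finset.sum_add_distrib, mul_add,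
    ← Finset.sum_add_distrib]
  exact Finset.sum_congr rfl fun i _ => Finset.sum_congr rfl fun j _ => by ring

lemma dot_symm_swap {n : ℕ} (M : Matrix (Fin n) (Fin n) ℝ) (hs : ∀ i j, M i j = M j i)
    (u w : Fin n → ℝ) : u ⬝ᵥ (M *ᵥ w) = w ⬝ᵥ (M *ᵥ u) := by
  simp only [dotProduct, Matrix.mulVec, Finset.mul_sum]
  rw [Finset.sum_comm]
  exact Finset.sum_congr rfl fun i _ => Finset.sum_congr rfl fun j _ => by rw [hs j i]; ring

/-- Under the tank setup, since `φ(t) ∈ {0,1}` and `P_D(t) ≥ 0`, for every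
`t ≥ 0` the dissipation inequality
`∫₀ᵗ ẋᵀ F_ext dτ ≥ H(t) − H(0) + T(t) − T(0) − ∫₀ᵗ (1 − γ) P_M dτ` holds. -/
theorem tank_dissipation_inequality {n : ℕ} (hn : 0 < n)
    (x : ℝ → Fin n → ℝ) (hx : ContDiff ℝ 2 x)
    (Md Dd Md' Dd' : ℝ → Matrix (Fin n) (Fin n) ℝ)
    (hMd' : ∀ i j t, HasDerivAt (fun s => Md s i j) (Md' t i j) t)
    (hMd'cont : ∀ i j, Continuous fun t => Md' t i j)
    (hDd' : ∀ i j t, HasDerivAt (fun s => Dd s i j) (Dd' t i j) t)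
    (hDd'cont : ∀ i j, Continuous fun t => Dd' t i j)
    (hMdpd : ∀ t, (Md t).PosDef) (hDdpd : ∀ t, (Dd t).PosDef)
    (Fext : ℝ → Fin n → ℝ)
    (hFext : ∀ t, Fext t = Md t *ᵥ deriv (deriv x) t + Dd t *ᵥ deriv x t)
    (PD PM : ℝ → ℝ)
    (hPD : ∀ t, PD t = deriv x t ⬝ᵥ (Dd t *ᵥ deriv x t))
    (hPM : ∀ t, PM t = (1 / 2) * (deriv x t ⬝ᵥ (Md' t *ᵥ deriv x t)))
    (φ γ : ℝ → ℝ)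
    (hφ : ∀ t, φ t = 0 ∨ φ t = 1) (hγ : ∀ t, γ t = 0 ∨ γ t = 1)
    (hφPDint : ∀ t, IntervalIntegrable (fun τ => (1 - φ τ) * PD τ) MeasureTheory.volume 0 t)
    (hγPMint : ∀ t, IntervalIntegrable (fun τ => (1 - γ τ) * PM τ) MeasureTheory.volume 0 t)
    (z : ℝ → ℝ) (hz : ∀ t, z t ≠ 0)
    (hzdyn : ∀ t, HasDerivAt z (φ t / z t * PD t - γ t / z t * PM t) t)
    (T H : ℝ → ℝ)
    (hT : ∀ t, T t = (1 / 2) * z t ^ 2)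
    (hH : ∀ t, H t = (1 / 2) * (deriv x t ⬝ᵥ (Md t *ᵥ deriv x t))) :
    ∀ t ≥ (0 : ℝ),
      (∫ τ in (0 : ℝ)..t, deriv x τ ⬝ᵥ Fext τ) ≥
        H t - H 0 + T t - T 0 - ∫ τ in (0 : ℝ)..t, (1 - γ τ) * PM τ := by
  intro t ht
  -- regularity of x
  have h2 : ContDiff ℝ (((1:ℕ):ℕ∞)+1) x := by exact_mod_cast hx
  rw [contDiff_succ_iff_deriv] at h2
  have hvdiff : Differentiable ℝ (deriv x) := h2.2.2.differentiable (by norm_num)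
  have hacont : Continuous (deriv (deriv x)) := h2.2.2.continuous_deriv (by norm_num)
  have hvcont : Continuous (deriv x) := hvdiff.continuous
  set v : ℝ → Fin n → ℝ := deriv x with hvdef
  set a : ℝ → Fin n → ℝ := deriv (deriv x) with hadef
  have hva : ∀ s, HasDerivAt v (a s) s := fun s => (hvdiff s).hasDerivAt
  have hvi : ∀ (s : ℝ) i, HasDerivAt (fun r => v r i) (a s i) s :=
    fun s i => (hasDerivAt_pi.mp (hva s)) i
  have hsym : ∀ s i j, Md s i j = Md s j i := by
    intro s i j
    have h := congrFun (congrFun (hMdpd s).1 j) i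
    simpa [Matrix.conjTranspose_apply] using h
  -- continuity of matrix entries
  have hMdc : ∀ i j, Continuous fun τ => Md τ i j :=
    fun i j => continuous_iff_continuousAt.mpr fun τ => (hMd' i j τ).continuousAt
  have hDdc : ∀ i j, Continuous fun τ => Dd τ i j :=
    fun i j => continuous_iff_continuousAt.mpr fun τ => (hDd' i j τ).continuousAt
  -- derivative of H
  have hHder : ∀ s, HasDerivAt H (v s ⬝ᵥ (Md s *ᵥ a s) + PM s) s := by
    intro s
    have hq := (quad_hasDerivAt (v := v) (a := a) (M := Md) (M' := Md') (t := s)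
      (hvi s) (fun i j => hMd' i j s)).const_mul (1/2)
    have hfun : H = fun r => (1/2) * (v r ⬝ᵥ (Md r *ᵥ v r)) := funext hH
    rw [hfun]
    refine hq.congr_deriv ?_
    rw [hPM s, dot_symm_swap (Md s) (hsym s) (a s) (v s)]
    ring
  -- derivative of T
  have hTder : ∀ s, HasDerivAt T (φ s * PD s - γ s * PM s) s := by
    intro s
    have hq := ((hzdyn s).pow 2).const_mul (1/2)
    have hfun : T = fun r => (1/2) * z r ^ 2 := funext hT
    rw [hfun]
    refine hq.congr_deriv ?_
    have hzs := hz s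
    field_simp
    norm_num
  -- combined derivative
  have hEder : ∀ s, HasDerivAt (fun r => H r + T r)
      (v s ⬝ᵥ Fext s - (1 - φ s) * PD s + (1 - γ s) * PM s) s := by
    intro s
    have hq := (hHder s).add (hTder s)
    refine hq.congr_deriv ?_
    rw [hFext s, hPD s]
    rw [dotProduct_add]
    ring
  -- continuity of the external power
  have hccont : Continuous fun τ => v τ ⬝ᵥ Fext τ := by
    have hfun : (fun τ => v τ ⬝ᵥ Fext τ) =
        fun τ => ∑ i, v τ i * ((∑ j, Md τ i j * a τ j) + ∑ j, Dd τ i j * v τ j) := by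
      funext τ
      rw [hFext τ]
      simp [dotProduct, Matrix.mulVec, Pi.add_apply]
    rw [hfun]
    refine continuous_finset_sum _ fun i _ => ?_
    exact ((continuous_apply i).comp hvcont).mul
      ((continuous_finset_sum _ fun j _ =>
          (hMdc i j).mul ((continuous_apply j).comp hacont)).add
        (continuous_finset_sum _ fun j _ =>
          (hDdc i j).mul ((continuous_apply j).comp hvcont)))
  have hcint : IntervalIntegrable (fun τ => v τ ⬝ᵥ Fext τ) MeasureTheory.volume 0 t :=
    hccont.intervalIntegrable 0 t
  have hgint : IntervalIntegrable
      (fun τ => v τ ⬝ᵥ Fext τ - (1 - φ τ) * PD τ + (1 - γ τ) * PM τ)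
      MeasureTheory.volume 0 t := (hcint.sub (hφPDint t)).add (hγPMint t)
  -- FTC
  have hftc := intervalIntegral.integral_eq_sub_of_hasDerivAt
    (f := fun r => H r + T r) (fun s _ => hEder s) hgint
  have hsplit : (∫ τ in (0:ℝ)..t, (v τ ⬝ᵥ Fext τ - (1 - φ τ) * PD τ + (1 - γ τ) * PM τ)) =
      (∫ τ in (0:ℝ)..t, v τ ⬝ᵥ Fext τ) - (∫ τ in (0:ℝ)..t, (1 - φ τ) * PD τ)
        + ∫ τ in (0:ℝ)..t, (1 - γ τ) * PM τ := by
    rw [intervalIntegral.integral_add (hcint.sub (hφPDint t)) (hγPMint t),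
      intervalIntegral.integral_sub hcint (hφPDint t)]
  have hnn : 0 ≤ ∫ τ in (0:ℝ)..t, (1 - φ τ) * PD τ := by
    refine intervalIntegral.integral_nonneg ht fun τ _ => ?_
    have hPDnn : 0 ≤ PD τ := by
      rw [hPD τ]
      have h := (hDdpd τ).posSemidef.dotProduct_mulVec_nonneg (v τ)
      simpa using h
    rcases hφ τ with h | h <;> simp [h, hPDnn]
  rw [hsplit] at hftc
  beta_reduce at hftc
  linarith [hftc, hnn]
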